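/- arXiv:1910.04672 — 4 statements merged into one kernel-verified Lean document; each statement's English description precedes it below -/
import Mathlib

section
/- With the latent-variable setup below, the integrated product of the subposteriors can be written as a latent-variable expectation: ∫_Θ ∏_{s=1}^S q_s(θ) dμ(θ) = ∫_{Z_1×⋯×Z_S} ( ∫_Θ ∏_{s=1}^S q_s^{z_s}(θ) dμ(θ) ) ∏_{s=1}^S r_s(z_s) d(ν_1⊗⋯⊗ν_S)(z_1,…,z_S) (Proposition 2: the subposterior integral for conditionally conjugate models equals the expectation, under the product of the latent subposteriors, of the integrated product of the conditional subposteriors). -/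
open MeasureTheory ENNReal

/-- Finite products of divisions in `ℝ≥0∞` combine, provided the denominators are
nonzero and finite. -/
lemma ennreal_prod_div {ι : Type*} (t : Finset ι) (a b : ι → ℝ≥0∞)
    (hb0 : ∀ i ∈ t, b i ≠ 0) (hbt : ∀ i ∈ t, b i ≠ ⊤) :
    ∏ i ∈ t, a i / b i = (∏ i ∈ t, a i) / ∏ i ∈ t, b i := by
  induction t using Finset.cons_induction with
  | empty => simp
  | cons i t hit ih =>
    rw [Finset.prod_cons, Finset.prod_cons, Finset.prod_cons,
      ih (fun j hj => hb0 j (Finset.mem_cons_of_mem hj))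
        (fun j hj => hbt j (Finset.mem_cons_of_mem hj))]
    have hB0 : (∏ j ∈ t, b j) ≠ 0 :=
      Finset.prod_ne_zero_iff.2 fun j hj => hb0 j (Finset.mem_cons_of_mem hj)
    have hBt : (∏ j ∈ t, b j) ≠ ⊤ :=
      (ENNReal.prod_lt_top fun j hj => (hbt j (Finset.mem_cons_of_mem hj)).lt_top).ne
    rw [div_eq_mul_inv, div_eq_mul_inv, div_eq_mul_inv,
      ENNReal.mul_inv (Or.inl (hb0 i (Finset.mem_cons_self i t))) (Or.inr hB0)]
    ring

/-- Tonelli for finite products over a product measure: the integral of a product of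
coordinate functions equals the product of the integrals. -/
lemma lintegral_pi_prod : ∀ (n : ℕ) (Z : Fin n → Type u) (_ : ∀ s, MeasurableSpace (Z s))
    (ν : ∀ s, Measure (Z s)) (_ : ∀ s, SigmaFinite (ν s))
    (g : ∀ s, Z s → ℝ≥0∞) (_ : ∀ s, Measurable (g s)),
    ∫⁻ z, ∏ s, g s (z s) ∂Measure.pi ν = ∏ s, ∫⁻ z, g s z ∂ν s := by
  intro n
  induction n with
  | zero =>
    intro Z _ ν _ g hg
    simp [Measure.pi_of_empty]
  | succ n ih =>
    intro Z _ ν _ g hg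
    have mp := MeasureTheory.measurePreserving_piFinSuccAbove ν 0
    set e := MeasurableEquiv.piFinSuccAbove Z 0 with he
    have hf : Measurable fun y : Z 0 × ∀ j : Fin n, Z ((0 : Fin (n + 1)).succAbove j) =>
        g 0 y.1 * ∏ j, g ((0 : Fin (n + 1)).succAbove j) (y.2 j) := by
      refine ((hg 0).comp measurable_fst).mul ?_
      exact Finset.measurable_prod _ fun j _ =>
        (hg _).comp ((measurable_pi_apply j).comp measurable_snd)
    have hcomp : ∀ z : ∀ s, Z s,
        (∏ s, g s (z s)) = g 0 (e z).1 * ∏ j, g ((0 : Fin (n + 1)).succAbove j) ((e z).2 j) := by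
      intro z
      have : (e z) = (z 0, fun j => z ((0 : Fin (n + 1)).succAbove j)) := rfl
      rw [this]
      rw [Fin.prod_univ_succ]
      congr 1
    calc ∫⁻ z, ∏ s, g s (z s) ∂Measure.pi ν
        = ∫⁻ z, g 0 (e z).1 * ∏ j, g ((0 : Fin (n + 1)).succAbove j) ((e z).2 j)
            ∂Measure.pi ν := by
          exact lintegral_congr hcomp
      _ = ∫⁻ y, g 0 y.1 * ∏ j, g ((0 : Fin (n + 1)).succAbove j) (y.2 j)
            ∂((ν 0).prod <| Measure.pi fun j => ν ((0 : Fin (n + 1)).succAbove j)) :=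
          mp.lintegral_comp hf
      _ = ∫⁻ a, ∫⁻ w, g 0 a * ∏ j, g ((0 : Fin (n + 1)).succAbove j) (w j)
            ∂(Measure.pi fun j => ν ((0 : Fin (n + 1)).succAbove j)) ∂ν 0 :=
          lintegral_prod _ hf.aemeasurable
      _ = ∫⁻ a, g 0 a * ∫⁻ w, ∏ j, g ((0 : Fin (n + 1)).succAbove j) (w j)
            ∂(Measure.pi fun j => ν ((0 : Fin (n + 1)).succAbove j)) ∂ν 0 := by
          refine lintegral_congr fun a => ?_
          exact lintegral_const_mul _ (Finset.measurable_prod _ fun j _ =>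
            (hg _).comp (measurable_pi_apply j))
      _ = (∫⁻ a, g 0 a ∂ν 0) * ∫⁻ w, ∏ j, g ((0 : Fin (n + 1)).succAbove j) (w j)
            ∂(Measure.pi fun j => ν ((0 : Fin (n + 1)).succAbove j)) :=
          lintegral_mul_const'' _ (hg 0).aemeasurable
      _ = ∏ s, ∫⁻ z, g s z ∂ν s := by
          rw [ih _ inferInstance _ inferInstance _ (fun j => hg _)]
          rw [Fin.prod_univ_succ]
          simp_rw [Fin.succAbove_zero]
          rfl

/-- Proposition 2: the subposterior integral for conditionally conjugate models equals
the expectation, under the product of the latent subposteriors, of the integrated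
product of the conditional subposteriors. -/
theorem subposterior_integral_latent
    {Θ : Type*} [MeasurableSpace Θ] (μ : Measure Θ) [SigmaFinite μ]
    (S : ℕ) (hS : 1 ≤ S)
    (π : Θ → ℝ≥0∞) (hπ : Measurable π) (hπ1 : ∫⁻ θ, π θ ∂μ = 1)
    (L : Fin S → Θ → ℝ≥0∞) (hL : ∀ s, Measurable (L s))
    (α : ℝ≥0∞) (hα : α = ∫⁻ θ, π θ ^ (1 / (S : ℝ)) ∂μ)
    (hα0 : α ≠ 0) (hαtop : α ≠ ⊤)
    (πsub : Θ → ℝ≥0∞) (hπsub : ∀ θ, πsub θ = π θ ^ (1 / (S : ℝ)) / α)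
    (c : Fin S → ℝ≥0∞) (hc : ∀ s, c s = ∫⁻ θ, L s θ * πsub θ ∂μ)
    (hc0 : ∀ s, c s ≠ 0) (hctop : ∀ s, c s ≠ ⊤)
    (q : Fin S → Θ → ℝ≥0∞) (hq : ∀ s θ, q s θ = L s θ * πsub θ / c s)
    (Z : Fin S → Type*) [∀ s, MeasurableSpace (Z s)]
    (ν : ∀ s, Measure (Z s)) [∀ s, SigmaFinite (ν s)]
    (k : ∀ s, Θ → Z s → ℝ≥0∞) (hk : ∀ s, Measurable (Function.uncurry (k s)))
    (hLk : ∀ s θ, L s θ = ∫⁻ z, k s θ z ∂ν s)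
    (d : ∀ s, Z s → ℝ≥0∞) (hd : ∀ s z, d s z = ∫⁻ θ, k s θ z * πsub θ ∂μ)
    (hdae : ∀ s, ∀ᵐ z ∂ν s, d s z ≠ 0 ∧ d s z ≠ ⊤)
    (qz : ∀ s, Z s → Θ → ℝ≥0∞)
    (hqz : ∀ s z θ, qz s z θ =
      if d s z = 0 ∨ d s z = ⊤ then 0 else k s θ z * πsub θ / d s z)
    (r : ∀ s, Z s → ℝ≥0∞) (hr : ∀ s z, r s z = d s z / c s) :
    ∫⁻ θ, ∏ s, q s θ ∂μ =
      ∫⁻ z : ∀ s, Z s, (∫⁻ θ, ∏ s, qz s (z s) θ ∂μ) * ∏ s, r s (z s) ∂Measure.pi ν := by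
  classical
  have hπm : Measurable πsub := by
    have : Measurable fun θ => π θ ^ (1 / (S : ℝ)) / α :=
      (hπ.pow_const _).div_const α
    simpa [funext hπsub] using this
  -- the product of the normalizers
  set P : ℝ≥0∞ := ∏ s, c s with hP
  have hP0 : P ≠ 0 := Finset.prod_ne_zero_iff.2 fun s _ => hc0 s
  have hPtop : P ≠ ⊤ := (ENNReal.prod_lt_top fun s _ => (hctop s).lt_top).ne
  -- measurable sections of k
  have hksec : ∀ s (θ : Θ), Measurable fun z => k s θ z := fun s θ =>
    (hk s).comp measurable_prodMk_left
  have hkzsec : ∀ s (z : Z s), Measurable fun θ => k s θ z := fun s z =>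
    (hk s).comp (measurable_id.prodMk measurable_const)
  -- Step 1: the LHS equals (∫ ∏ (L s * πsub)) / P
  have step1 : ∫⁻ θ, ∏ s, q s θ ∂μ = (∫⁻ θ, ∏ s, (L s θ * πsub θ) ∂μ) / P := by
    have : ∀ θ, ∏ s, q s θ = (∏ s, (L s θ * πsub θ)) / P := by
      intro θ
      simp only [hq]
      exact ennreal_prod_div _ _ _ (fun s _ => hc0 s) (fun s _ => hctop s)
    rw [lintegral_congr this]
    simp only [div_eq_mul_inv]
    exact lintegral_mul_const' _ _ (by simp [hP0])
  -- Step 2: express ∏ (L s * πsub) as an integral over the latent product space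
  have step2 : ∀ θ, (∏ s, (L s θ * πsub θ)) =
      ∫⁻ z : ∀ s, Z s, ∏ s, (k s θ (z s) * πsub θ) ∂Measure.pi ν := by
    intro θ
    rw [lintegral_pi_prod S Z inferInstance ν inferInstance (fun s z => k s θ z * πsub θ)
      (fun s => (hksec s θ).mul measurable_const)]
    refine Finset.prod_congr rfl fun s _ => ?_
    rw [hLk s θ, ← lintegral_mul_const _ (hksec s θ)]
  -- Step 3: swap the order of integration (Tonelli)
  have hFm : Measurable (Function.uncurry fun (θ : Θ) (z : ∀ s, Z s) =>
      ∏ s, (k s θ (z s) * πsub θ)) := by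
    refine Finset.measurable_prod _ fun s _ => ?_
    exact ((hk s).comp
      (measurable_fst.prodMk ((measurable_pi_apply s).comp measurable_snd))).mul
      (hπm.comp measurable_fst)
  have step3 : ∫⁻ θ, ∫⁻ z : ∀ s, Z s, ∏ s, (k s θ (z s) * πsub θ) ∂Measure.pi ν ∂μ =
      ∫⁻ z : ∀ s, Z s, ∫⁻ θ, ∏ s, (k s θ (z s) * πsub θ) ∂μ ∂Measure.pi ν :=
    lintegral_lintegral_swap hFm.aemeasurable
  -- a.e. on the product space, each d s (z s) is nonzero and finite
  have hdae' : ∀ᵐ z : (∀ s, Z s) ∂Measure.pi ν, ∀ s, d s (z s) ≠ 0 ∧ d s (z s) ≠ ⊤ := by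
    rw [MeasureTheory.ae_all_iff]
    intro s
    exact (MeasureTheory.Measure.tendsto_eval_ae_ae).eventually (hdae s)
  -- Step 4: a.e. identity for the RHS integrand
  have step4 : ∀ᵐ z : (∀ s, Z s) ∂Measure.pi ν,
      (∫⁻ θ, ∏ s, qz s (z s) θ ∂μ) * ∏ s, r s (z s) =
        (∫⁻ θ, ∏ s, (k s θ (z s) * πsub θ) ∂μ) / P := by
    filter_upwards [hdae'] with z hz
    have hD0 : (∏ s, d s (z s)) ≠ 0 := Finset.prod_ne_zero_iff.2 fun s _ => (hz s).1
    have hDtop : (∏ s, d s (z s)) ≠ ⊤ :=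
      (ENNReal.prod_lt_top fun s _ => (hz s).2.lt_top).ne
    have hqz' : ∀ θ, ∏ s, qz s (z s) θ =
        (∏ s, (k s θ (z s) * πsub θ)) / ∏ s, d s (z s) := by
      intro θ
      have : ∀ s, qz s (z s) θ = (k s θ (z s) * πsub θ) / d s (z s) := by
        intro s
        rw [hqz]
        rw [if_neg]
        push_neg
        exact hz s
      simp only [this]
      exact ennreal_prod_div _ _ _ (fun s _ => (hz s).1) (fun s _ => (hz s).2)
    have hrz : ∏ s, r s (z s) = (∏ s, d s (z s)) / P := by
      simp only [hr]
      exact ennreal_prod_div _ _ _ (fun s _ => hc0 s) (fun s _ => hctop s)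
    rw [lintegral_congr hqz', hrz]
    have hint : ∫⁻ θ, (∏ s, (k s θ (z s) * πsub θ)) / ∏ s, d s (z s) ∂μ =
        (∫⁻ θ, ∏ s, (k s θ (z s) * πsub θ) ∂μ) / ∏ s, d s (z s) := by
      simp only [div_eq_mul_inv]
      exact lintegral_mul_const' _ _ (by simp [hD0])
    rw [hint]
    rw [div_eq_mul_inv, div_eq_mul_inv, div_eq_mul_inv, mul_assoc, ← mul_assoc (∏ s, d s (z s))⁻¹,
      ENNReal.inv_mul_cancel hD0 hDtop, one_mul]
  -- combine
  rw [step1, lintegral_congr step2, step3, lintegral_congr_ae step4]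
  simp only [div_eq_mul_inv]
  exact (lintegral_mul_const' _ _ (by simp [hP0])).symm
end

section
/- With the latent-variable setup below, for every z = (z_1,…,z_S) ∈ Z_1×⋯×Z_S such that 0 < d_s(z_s) < ∞ for all s, the integrated product of the conditional subposteriors equals the subposterior integral times the importance ratio of the joint latent posterior to the product of the latent subposteriors: ∫_Θ ∏_{s=1}^S q_s^{z_s}(θ) dμ(θ) = I_sub · P(z_1,…,z_S) / ∏_{s=1}^S r_s(z_s). -/
open MeasureTheory ENNReal

/-- The integrated product of the conditional subposteriors equals the subposterior
integral times the importance ratio of the joint latent posterior to the product of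
the latent subposteriors. -/
theorem conditional_subposterior_importance_ratio
    {Θ : Type*} [MeasurableSpace Θ] (μ : Measure Θ) [SigmaFinite μ]
    (S : ℕ) (hS : 1 ≤ S)
    (π : Θ → ℝ≥0∞) (hπ : Measurable π) (hπ1 : ∫⁻ θ, π θ ∂μ = 1)
    (L : Fin S → Θ → ℝ≥0∞) (hL : ∀ s, Measurable (L s))
    (α : ℝ≥0∞) (hα : α = ∫⁻ θ, π θ ^ (1 / (S : ℝ)) ∂μ)
    (hα0 : α ≠ 0) (hαtop : α ≠ ⊤)
    (πsub : Θ → ℝ≥0∞) (hπsub : ∀ θ, πsub θ = π θ ^ (1 / (S : ℝ)) / α)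
    (c : Fin S → ℝ≥0∞) (hc : ∀ s, c s = ∫⁻ θ, L s θ * πsub θ ∂μ)
    (hc0 : ∀ s, c s ≠ 0) (hctop : ∀ s, c s ≠ ⊤)
    (q : Fin S → Θ → ℝ≥0∞) (hq : ∀ s θ, q s θ = L s θ * πsub θ / c s)
    (Z : Fin S → Type*) [∀ s, MeasurableSpace (Z s)]
    (ν : ∀ s, Measure (Z s)) [∀ s, SigmaFinite (ν s)]
    (k : ∀ s, Θ → Z s → ℝ≥0∞) (hk : ∀ s, Measurable (Function.uncurry (k s)))
    (hLk : ∀ s θ, L s θ = ∫⁻ z, k s θ z ∂ν s)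
    (d : ∀ s, Z s → ℝ≥0∞) (hd : ∀ s z, d s z = ∫⁻ θ, k s θ z * πsub θ ∂μ)
    (qz : ∀ s, Z s → Θ → ℝ≥0∞)
    (hqz : ∀ s z θ, qz s z θ = k s θ z * πsub θ / d s z)
    (r : ∀ s, Z s → ℝ≥0∞) (hr : ∀ s z, r s z = d s z / c s)
    (py : ℝ≥0∞) (hpy : py = ∫⁻ θ, (∏ s, L s θ) * π θ ∂μ)
    (hpy0 : py ≠ 0) (hpytop : py ≠ ⊤)
    (Isub : ℝ≥0∞) (hIsub : Isub = ∫⁻ θ, ∏ s, q s θ ∂μ)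
    (P : (∀ s, Z s) → ℝ≥0∞)
    (hP : ∀ z : ∀ s, Z s, P z = (∫⁻ θ, (∏ s, k s θ (z s)) * π θ ∂μ) / py)
    (z : ∀ s, Z s) (hz : ∀ s, d s (z s) ≠ 0 ∧ d s (z s) ≠ ⊤) :
    ∫⁻ θ, ∏ s, qz s (z s) θ ∂μ = Isub * P z / ∏ s, r s (z s) := by
  have hS0 : (S : ℝ) ≠ 0 := Nat.cast_ne_zero.2 (by omega)
  set A : ℝ≥0∞ := α ^ S with hA
  have hA0 : A ≠ 0 := pow_ne_zero _ hα0
  have hAtop : A ≠ ⊤ := by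
    simpa [hA] using ENNReal.pow_ne_top hαtop
  set D : ℝ≥0∞ := ∏ s, d s (z s) with hD
  have hD0 : D ≠ 0 := Finset.prod_ne_zero_iff.2 fun s _ => (hz s).1
  have hDtop : D ≠ ⊤ := ENNReal.prod_ne_top fun s _ => (hz s).2
  set Cc : ℝ≥0∞ := ∏ s, c s with hCc
  have hCc0 : Cc ≠ 0 := Finset.prod_ne_zero_iff.2 fun s _ => hc0 s
  have hCctop : Cc ≠ ⊤ := ENNReal.prod_ne_top fun s _ => hctop s
  set J : ℝ≥0∞ := ∫⁻ θ, (∏ s, k s θ (z s)) * π θ ∂μ with hJ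
  -- the product of S copies of the subprior is the prior divided by α^S
  have hπprod : ∀ θ, ∏ _s : Fin S, πsub θ = π θ * A⁻¹ := by
    intro θ
    rw [Finset.prod_const, Finset.card_univ, Fintype.card_fin, hπsub θ, div_eq_mul_inv,
      mul_pow, ← ENNReal.rpow_natCast (π θ ^ (1/(S:ℝ))), ← ENNReal.rpow_mul,
      one_div, inv_mul_cancel₀ hS0, ENNReal.rpow_one, ENNReal.inv_pow]
  -- compute the LHS
  have hdinv : (∏ s, (d s (z s))⁻¹) = D⁻¹ :=
    (ENNReal.prod_inv_distrib (fun i _ j _ _ => Or.inl (hz i).1)).symm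
  have hcinv : (∏ s, (c s)⁻¹) = Cc⁻¹ :=
    (ENNReal.prod_inv_distrib (fun i _ j _ _ => Or.inl (hc0 i))).symm
  have hlhs : ∫⁻ θ, ∏ s, qz s (z s) θ ∂μ = J * (A⁻¹ * D⁻¹) := by
    have h1 : ∀ θ, ∏ s, qz s (z s) θ
        = ((∏ s, k s θ (z s)) * π θ) * (A⁻¹ * D⁻¹) := by
      intro θ
      simp only [hqz, div_eq_mul_inv]
      rw [Finset.prod_mul_distrib, Finset.prod_mul_distrib, hπprod θ, hdinv]
      ring
    rw [lintegral_congr h1, lintegral_mul_const' _ _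
      (by simp [ENNReal.mul_ne_top, ENNReal.inv_ne_top.2 hA0, ENNReal.inv_ne_top.2 hD0]), hJ]
  rw [hlhs]
  -- compute Isub
  have hIsub' : Isub = py * (A⁻¹ * Cc⁻¹) := by
    have h2 : ∀ θ, ∏ s, q s θ = ((∏ s, L s θ) * π θ) * (A⁻¹ * Cc⁻¹) := by
      intro θ
      simp only [hq, div_eq_mul_inv]
      rw [Finset.prod_mul_distrib, Finset.prod_mul_distrib, hπprod θ, hcinv]
      ring
    rw [hIsub, lintegral_congr h2, lintegral_mul_const' _ _
      (by simp [ENNReal.mul_ne_top, ENNReal.inv_ne_top.2 hA0, ENNReal.inv_ne_top.2 hCc0]), hpy]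
  -- compute ∏ r
  have hrprod : (∏ s, r s (z s)) = D * Cc⁻¹ := by
    simp only [hr, div_eq_mul_inv]
    rw [Finset.prod_mul_distrib, hcinv]
  rw [hIsub', hP z, ← hJ, hrprod, div_eq_mul_inv, div_eq_mul_inv,
    ENNReal.mul_inv (Or.inl hD0) (Or.inl hDtop), inv_inv]
  have hpp : py⁻¹ * py = 1 := ENNReal.inv_mul_cancel hpy0 hpytop
  have hcc : Cc⁻¹ * Cc = 1 := ENNReal.inv_mul_cancel hCc0 hCctop
  symm
  calc py * (A⁻¹ * Cc⁻¹) * (J * py⁻¹) * (D⁻¹ * Cc)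
      = J * (A⁻¹ * D⁻¹) * (py⁻¹ * py) * (Cc⁻¹ * Cc) := by ring
    _ = J * (A⁻¹ * D⁻¹) := by rw [hpp, hcc, mul_one, mul_one]
end

section
/- Let (Θ, 𝒜, μ) be a σ-finite measure space, S ≥ 1, A ≥ 0 and ε_1,…,ε_S ≥ 0, and for s = 1,…,S let p_s, q_s : Θ → [0,∞) be measurable with ∫_Θ p_s dμ = ∫_Θ q_s dμ = 1, p_s(θ) ≤ A and q_s(θ) ≤ A for all θ, and ∫_Θ |p_s − q_s| dμ ≤ ε_s. Then |∫_Θ ∏_{s=1}^S p_s dμ − ∫_Θ ∏_{s=1}^S q_s dμ| ≤ A^{S−1} ∑_{s=1}^S ε_s. (Deterministic core of Proposition 4: if each subposterior is uniformly bounded by A, has a normal approximation uniformly bounded by A, and is within L¹-distance ε_s of its normal approximation, then the error in the integrated product of subposteriors is at most A^{S−1} ∑_s ε_s.) -/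
open MeasureTheory

lemma abs_prod_sub_prod_le {ι : Type*} [DecidableEq ι] (t : Finset ι) (A : ℝ) (hA : 0 ≤ A)
    (f g : ι → ℝ) (hf0 : ∀ i, 0 ≤ f i) (hg0 : ∀ i, 0 ≤ g i)
    (hfA : ∀ i, f i ≤ A) (hgA : ∀ i, g i ≤ A) :
    |∏ i ∈ t, f i - ∏ i ∈ t, g i| ≤ A ^ (t.card - 1) * ∑ i ∈ t, |f i - g i| := by
  induction t using Finset.induction with
  | empty => simp
  | @insert a t ha ih =>
    rw [Finset.prod_insert ha, Finset.prod_insert ha, Finset.sum_insert ha,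
      Finset.card_insert_of_notMem ha]
    rcases Finset.eq_empty_or_nonempty t with rfl | hne
    · simp
    · have hcard : t.card ≥ 1 := Finset.card_pos.mpr hne
      have hexp : (t.card + 1 - 1 : ℕ) = t.card := by omega
      rw [hexp]
      have hPf : ∏ i ∈ t, f i ≤ A ^ t.card := by
        calc ∏ i ∈ t, f i ≤ ∏ _i ∈ t, A := Finset.prod_le_prod (fun i _ => hf0 i) (fun i _ => hfA i)
        _ = A ^ t.card := by rw [Finset.prod_const]
      have hPf0 : 0 ≤ ∏ i ∈ t, f i := Finset.prod_nonneg (fun i _ => hf0 i)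
      have key : f a * ∏ i ∈ t, f i - g a * ∏ i ∈ t, g i
          = (f a - g a) * ∏ i ∈ t, f i + g a * (∏ i ∈ t, f i - ∏ i ∈ t, g i) := by ring
      rw [key]
      calc |(f a - g a) * ∏ i ∈ t, f i + g a * (∏ i ∈ t, f i - ∏ i ∈ t, g i)|
          ≤ |(f a - g a) * ∏ i ∈ t, f i| + |g a * (∏ i ∈ t, f i - ∏ i ∈ t, g i)| := abs_add_le _ _
        _ = |f a - g a| * ∏ i ∈ t, f i + g a * |∏ i ∈ t, f i - ∏ i ∈ t, g i| := by
            rw [abs_mul, abs_mul, abs_of_nonneg hPf0, abs_of_nonneg (hg0 a)]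
        _ ≤ |f a - g a| * A ^ t.card + A * (A ^ (t.card - 1) * ∑ i ∈ t, |f i - g i|) := by
            exact add_le_add (mul_le_mul_of_nonneg_left hPf (abs_nonneg _))
              (mul_le_mul (hgA a) ih (abs_nonneg _) hA)
        _ = A ^ t.card * |f a - g a| + (A * A ^ (t.card - 1)) * ∑ i ∈ t, |f i - g i| := by ring
        _ = A ^ t.card * (|f a - g a| + ∑ i ∈ t, |f i - g i|) := by
            have : A * A ^ (t.card - 1) = A ^ t.card := by
              rw [← pow_succ']
              congr 1
              omega
            rw [this]; ring

/-- Deterministic core of Proposition 4: if each density is uniformly bounded by `A`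
and within `L¹`-distance `ε_s` of its approximation, then the error in the integrated
product is at most `A^(S-1) ∑_s ε_s`. -/
theorem abs_integral_prod_densities_le
    {Θ : Type*} [MeasurableSpace Θ] (μ : Measure Θ) [SigmaFinite μ]
    (S : ℕ) (hS : 1 ≤ S) (A : ℝ) (hA : 0 ≤ A)
    (ε : Fin S → ℝ) (hε : ∀ s, 0 ≤ ε s)
    (p q : Fin S → Θ → ℝ)
    (hpm : ∀ s, Measurable (p s)) (hqm : ∀ s, Measurable (q s))
    (hp0 : ∀ s θ, 0 ≤ p s θ) (hq0 : ∀ s θ, 0 ≤ q s θ)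
    (hpA : ∀ s θ, p s θ ≤ A) (hqA : ∀ s θ, q s θ ≤ A)
    (hp1 : ∀ s, ∫ θ, p s θ ∂μ = 1) (hq1 : ∀ s, ∫ θ, q s θ ∂μ = 1)
    (hL1 : ∀ s, ∫ θ, |p s θ - q s θ| ∂μ ≤ ε s) :
    |(∫ θ, ∏ s, p s θ ∂μ) - ∫ θ, ∏ s, q s θ ∂μ| ≤ A ^ (S - 1) * ∑ s, ε s := by
  have hpint : ∀ s, Integrable (p s) μ := by
    intro s
    by_contra h
    have := hp1 s
    rw [integral_undef h] at this
    norm_num at this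
  have hqint : ∀ s, Integrable (q s) μ := by
    intro s
    by_contra h
    have := hq1 s
    rw [integral_undef h] at this
    norm_num at this
  set i0 : Fin S := ⟨0, hS⟩ with hi0
  have hcard : (Finset.univ.erase i0).card = S - 1 := by
    rw [Finset.card_erase_of_mem (Finset.mem_univ _), Finset.card_univ, Fintype.card_fin]
  -- integrability of products
  have hprodbound : ∀ (f : Fin S → Θ → ℝ) (hf0 : ∀ s θ, 0 ≤ f s θ) (hfA : ∀ s θ, f s θ ≤ A),
      ∀ θ, ∏ s, f s θ ≤ A ^ (S - 1) * f i0 θ := by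
    intro f hf0 hfA θ
    rw [← Finset.mul_prod_erase Finset.univ (fun s => f s θ) (Finset.mem_univ i0)]
    rw [mul_comm]
    gcongr
    · exact hf0 i0 θ
    calc ∏ s ∈ Finset.univ.erase i0, f s θ
        ≤ ∏ _s ∈ Finset.univ.erase i0, A :=
          Finset.prod_le_prod (fun s _ => hf0 s θ) (fun s _ => hfA s θ)
      _ = A ^ (S - 1) := by rw [Finset.prod_const, hcard]
  have hprodint : ∀ (f : Fin S → Θ → ℝ), (∀ s, Measurable (f s)) → (∀ s θ, 0 ≤ f s θ) →
      (∀ s θ, f s θ ≤ A) → (∀ s, Integrable (f s) μ) →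
      Integrable (fun θ => ∏ s, f s θ) μ := by
    intro f hfm hf0 hfA hfint
    refine Integrable.mono' ((hfint i0).const_mul (A ^ (S - 1))) ?_ ?_
    · exact (Finset.measurable_prod Finset.univ (fun s _ => hfm s)).aestronglyMeasurable
    · filter_upwards with θ
      rw [Real.norm_eq_abs, abs_of_nonneg (Finset.prod_nonneg fun s _ => hf0 s θ)]
      exact hprodbound f hf0 hfA θ
  have hPint := hprodint p hpm hp0 hpA hpint
  have hQint := hprodint q hqm hq0 hqA hqint
  have habsint : ∀ s, Integrable (fun θ => |p s θ - q s θ|) μ :=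
    fun s => ((hpint s).sub (hqint s)).abs
  have hRHSint : Integrable (fun θ => A ^ (S - 1) * ∑ s, |p s θ - q s θ|) μ :=
    (integrable_finset_sum Finset.univ (fun s _ => habsint s)).const_mul _
  calc |(∫ θ, ∏ s, p s θ ∂μ) - ∫ θ, ∏ s, q s θ ∂μ|
      = |∫ θ, (∏ s, p s θ - ∏ s, q s θ) ∂μ| := by rw [integral_sub hPint hQint]
    _ ≤ ∫ θ, |∏ s, p s θ - ∏ s, q s θ| ∂μ := by simpa [Real.norm_eq_abs] using norm_integral_le_integral_norm (fun θ => ∏ s, p s θ - ∏ s, q s θ)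
    _ ≤ ∫ θ, A ^ (S - 1) * ∑ s, |p s θ - q s θ| ∂μ := by
        refine integral_mono (hPint.sub hQint).abs hRHSint ?_
        intro θ
        have := abs_prod_sub_prod_le (Finset.univ : Finset (Fin S)) A hA
          (fun s => p s θ) (fun s => q s θ) (fun s => hp0 s θ) (fun s => hq0 s θ)
          (fun s => hpA s θ) (fun s => hqA s θ)
        simpa [Finset.card_univ] using this
    _ = A ^ (S - 1) * ∑ s, ∫ θ, |p s θ - q s θ| ∂μ := by
        rw [integral_const_mul, integral_finset_sum Finset.univ (fun s _ => habsint s)]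
    _ ≤ A ^ (S - 1) * ∑ s, ε s := by
        gcongr with s
        exact hL1 s
end

section
/- With the two-model divide-and-conquer setup below, the Bayes factor of model 1 over model 2 decomposes as a product of per-shard posterior-odds corrections times the ratio of the recombination terms: p_1(y)/p_2(y) = ( ∏_{s=1}^S [ π_s(1)·w_2 ] / [ π_s(2)·w_1 ] ) · ( α_1^S · I_1 ) / ( α_2^S · I_2 ), where I_i = ∫_Θ ∏_{s=1}^S q_s^{(i)}(θ) dμ(θ). -/
open MeasureTheory ENNReal

lemma aux_I_eq {Θ : Type*} [MeasurableSpace Θ] (μ : Measure Θ)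
    (S : ℕ) (hS : S ≠ 0)
    (π : Θ → ℝ≥0∞) (hπ : Measurable π)
    (L : Fin S → Θ → ℝ≥0∞) (hL : ∀ s, Measurable (L s))
    (α : ℝ≥0∞) (hα0 : α ≠ 0) (hαtop : α ≠ ⊤)
    (πsub : Θ → ℝ≥0∞) (hπsub : ∀ θ, πsub θ = π θ ^ (1 / (S : ℝ)) / α)
    (c : Fin S → ℝ≥0∞) (hc0 : ∀ s, c s ≠ 0)
    (q : Fin S → Θ → ℝ≥0∞) (hq : ∀ s θ, q s θ = L s θ * πsub θ / c s)
    (py : ℝ≥0∞) (hpy : py = ∫⁻ θ, (∏ s, L s θ) * π θ ∂μ)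
    (I : ℝ≥0∞) (hI : I = ∫⁻ θ, ∏ s, q s θ ∂μ) :
    I = py / (α ^ S * ∏ s, c s) := by
  have hkey : ∀ θ, ∏ s, q s θ = ((∏ s, L s θ) * π θ) * (α ^ S * ∏ s, c s)⁻¹ := by
    intro θ
    have h1 : ∏ s, q s θ = (∏ s, L s θ) * (πsub θ) ^ S * ∏ s, (c s)⁻¹ := by
      simp only [hq, div_eq_mul_inv, Finset.prod_mul_distrib, Finset.prod_const,
        Finset.card_univ, Fintype.card_fin]
    have h2 : (πsub θ) ^ S = π θ * (α ^ S)⁻¹ := by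
      rw [hπsub, div_eq_mul_inv, mul_pow, ← ENNReal.inv_pow]
      congr 1
      rw [← ENNReal.rpow_natCast (π θ ^ (1 / (S : ℝ))), ← ENNReal.rpow_mul,
        one_div, inv_mul_cancel₀ (by exact_mod_cast hS), ENNReal.rpow_one]
    have h3 : ∏ s, (c s)⁻¹ = (∏ s, c s)⁻¹ := by
      rw [ENNReal.prod_inv_distrib]
      intro i _ j _ _
      exact Or.inl (hc0 i)
    rw [h1, h2, h3, ENNReal.mul_inv (Or.inl (pow_ne_zero _ hα0))
      (Or.inl (ENNReal.pow_ne_top hαtop))]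
    ring
  have hmeas : AEMeasurable (fun θ => (∏ s, L s θ) * π θ) μ :=
    ((Finset.measurable_prod Finset.univ fun s _ => hL s).mul hπ).aemeasurable
  rw [hI]
  simp only [hkey]
  rw [lintegral_mul_const'' _ hmeas, ← hpy, div_eq_mul_inv]

/-- Distributed reversible-jump decomposition of the Bayes factor: the Bayes factor of
model 1 over model 2 decomposes as a product of per-shard posterior-odds corrections
times the ratio of the recombination terms. -/
theorem distributed_bayes_factor_decomposition
    {Θ : Type*} [MeasurableSpace Θ] (μ : Measure Θ) [SigmaFinite μ]
    (S : ℕ) (hS : 1 ≤ S)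
    -- model 1
    (π₁ : Θ → ℝ≥0∞) (hπ₁ : Measurable π₁) (hπ₁1 : ∫⁻ θ, π₁ θ ∂μ = 1)
    (L₁ : Fin S → Θ → ℝ≥0∞) (hL₁ : ∀ s, Measurable (L₁ s))
    (α₁ : ℝ≥0∞) (hα₁ : α₁ = ∫⁻ θ, π₁ θ ^ (1 / (S : ℝ)) ∂μ)
    (hα₁0 : α₁ ≠ 0) (hα₁top : α₁ ≠ ⊤)
    (πsub₁ : Θ → ℝ≥0∞) (hπsub₁ : ∀ θ, πsub₁ θ = π₁ θ ^ (1 / (S : ℝ)) / α₁)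
    (c₁ : Fin S → ℝ≥0∞) (hc₁ : ∀ s, c₁ s = ∫⁻ θ, L₁ s θ * πsub₁ θ ∂μ)
    (hc₁0 : ∀ s, c₁ s ≠ 0) (hc₁top : ∀ s, c₁ s ≠ ⊤)
    (q₁ : Fin S → Θ → ℝ≥0∞) (hq₁ : ∀ s θ, q₁ s θ = L₁ s θ * πsub₁ θ / c₁ s)
    (py₁ : ℝ≥0∞) (hpy₁ : py₁ = ∫⁻ θ, (∏ s, L₁ s θ) * π₁ θ ∂μ)
    (I₁ : ℝ≥0∞) (hI₁ : I₁ = ∫⁻ θ, ∏ s, q₁ s θ ∂μ)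
    -- model 2
    (π₂ : Θ → ℝ≥0∞) (hπ₂ : Measurable π₂) (hπ₂1 : ∫⁻ θ, π₂ θ ∂μ = 1)
    (L₂ : Fin S → Θ → ℝ≥0∞) (hL₂ : ∀ s, Measurable (L₂ s))
    (α₂ : ℝ≥0∞) (hα₂ : α₂ = ∫⁻ θ, π₂ θ ^ (1 / (S : ℝ)) ∂μ)
    (hα₂0 : α₂ ≠ 0) (hα₂top : α₂ ≠ ⊤)
    (πsub₂ : Θ → ℝ≥0∞) (hπsub₂ : ∀ θ, πsub₂ θ = π₂ θ ^ (1 / (S : ℝ)) / α₂)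
    (c₂ : Fin S → ℝ≥0∞) (hc₂ : ∀ s, c₂ s = ∫⁻ θ, L₂ s θ * πsub₂ θ ∂μ)
    (hc₂0 : ∀ s, c₂ s ≠ 0) (hc₂top : ∀ s, c₂ s ≠ ⊤)
    (q₂ : Fin S → Θ → ℝ≥0∞) (hq₂ : ∀ s θ, q₂ s θ = L₂ s θ * πsub₂ θ / c₂ s)
    (py₂ : ℝ≥0∞) (hpy₂ : py₂ = ∫⁻ θ, (∏ s, L₂ s θ) * π₂ θ ∂μ)
    (hpy₂0 : py₂ ≠ 0) (hpy₂top : py₂ ≠ ⊤)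
    (I₂ : ℝ≥0∞) (hI₂ : I₂ = ∫⁻ θ, ∏ s, q₂ s θ ∂μ)
    (hI₂0 : I₂ ≠ 0) (hI₂top : I₂ ≠ ⊤)
    -- prior model probabilities and per-shard subposterior model probabilities
    (w₁ w₂ : ℝ≥0∞) (hw₁ : w₁ ≠ 0) (hw₂ : w₂ ≠ 0) (hw : w₁ + w₂ = 1)
    (πm₁ πm₂ : Fin S → ℝ≥0∞)
    (hπm₁ : ∀ s, πm₁ s = c₁ s * w₁ / (c₁ s * w₁ + c₂ s * w₂))
    (hπm₂ : ∀ s, πm₂ s = c₂ s * w₂ / (c₁ s * w₁ + c₂ s * w₂)) :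
    py₁ / py₂ =
      (∏ s, πm₁ s * w₂ / (πm₂ s * w₁)) * (α₁ ^ S * I₁) / (α₂ ^ S * I₂) := by
  have hS0 : S ≠ 0 := by omega
  -- finiteness of weights
  have hw₁top : w₁ ≠ ⊤ := by
    intro h; rw [h] at hw; simp at hw
  have hw₂top : w₂ ≠ ⊤ := by
    intro h; rw [h] at hw; simp [add_comm] at hw
  -- products of c's
  set C₁ := ∏ s, c₁ s with hC₁
  set C₂ := ∏ s, c₂ s with hC₂
  have hC₁0 : C₁ ≠ 0 := Finset.prod_ne_zero_iff.2 fun s _ => hc₁0 s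
  have hC₂0 : C₂ ≠ 0 := Finset.prod_ne_zero_iff.2 fun s _ => hc₂0 s
  have hC₁top : C₁ ≠ ⊤ := ENNReal.prod_ne_top fun s _ => hc₁top s
  have hC₂top : C₂ ≠ ⊤ := ENNReal.prod_ne_top fun s _ => hc₂top s
  -- per-shard correction equals c₁/c₂
  have hshard : ∀ s, πm₁ s * w₂ / (πm₂ s * w₁) = c₁ s / c₂ s := by
    intro s
    set d := c₁ s * w₁ + c₂ s * w₂ with hd
    have hd0 : d ≠ 0 := by
      simp only [hd, ne_eq, add_eq_zero, mul_eq_zero, not_and, not_or]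
      intro h; exact absurd h (by simp [hc₁0 s, hw₁])
    have hdtop : d ≠ ⊤ := by
      exact ENNReal.add_ne_top.2 ⟨ENNReal.mul_ne_top (hc₁top s) hw₁top,
        ENNReal.mul_ne_top (hc₂top s) hw₂top⟩
    have hk0 : w₁ * w₂ * d⁻¹ ≠ 0 := by
      simp [mul_eq_zero, hw₁, hw₂, ENNReal.inv_ne_zero.2 hdtop]
    have hktop : w₁ * w₂ * d⁻¹ ≠ ⊤ :=
      ENNReal.mul_ne_top (ENNReal.mul_ne_top hw₁top hw₂top) (ENNReal.inv_ne_top.2 hd0)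
    have e₁ : πm₁ s * w₂ = c₁ s * (w₁ * w₂ * d⁻¹) := by
      rw [hπm₁ s, div_eq_mul_inv]; ring
    have e₂ : πm₂ s * w₁ = c₂ s * (w₁ * w₂ * d⁻¹) := by
      rw [hπm₂ s, div_eq_mul_inv]; ring
    rw [e₁, e₂, ENNReal.mul_div_mul_right _ _ hk0 hktop]
  -- the recombination integrals
  have hI₁' : I₁ = py₁ / (α₁ ^ S * C₁) :=
    aux_I_eq μ S hS0 π₁ hπ₁ L₁ hL₁ α₁ hα₁0 hα₁top πsub₁ hπsub₁ c₁ hc₁0 q₁ hq₁ py₁ hpy₁ I₁ hI₁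
  have hI₂' : I₂ = py₂ / (α₂ ^ S * C₂) :=
    aux_I_eq μ S hS0 π₂ hπ₂ L₂ hL₂ α₂ hα₂0 hα₂top πsub₂ hπsub₂ c₂ hc₂0 q₂ hq₂ py₂ hpy₂ I₂ hI₂
  have hA₁ : α₁ ^ S * I₁ = py₁ / C₁ := by
    rw [hI₁', ← mul_div_assoc, ENNReal.mul_div_mul_left _ _ (pow_ne_zero _ hα₁0)
      (ENNReal.pow_ne_top hα₁top)]
  have hA₂ : α₂ ^ S * I₂ = py₂ / C₂ := by
    rw [hI₂', ← mul_div_assoc, ENNReal.mul_div_mul_left _ _ (pow_ne_zero _ hα₂0)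
      (ENNReal.pow_ne_top hα₂top)]
  have hprod : (∏ s, πm₁ s * w₂ / (πm₂ s * w₁)) = C₁ / C₂ := by
    rw [Finset.prod_congr rfl fun s _ => hshard s]
    simp only [div_eq_mul_inv, Finset.prod_mul_distrib]
    rw [ENNReal.prod_inv_distrib fun i _ j _ _ => Or.inl (hc₂0 i)]
  rw [hprod, hA₁, hA₂]
  have step1 : C₁ / C₂ * (py₁ / C₁) = py₁ / C₂ := by
    simp only [div_eq_mul_inv]
    calc C₁ * C₂⁻¹ * (py₁ * C₁⁻¹) = py₁ * C₂⁻¹ * (C₁ * C₁⁻¹) := by ring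
    _ = py₁ * C₂⁻¹ := by rw [ENNReal.mul_inv_cancel hC₁0 hC₁top, mul_one]
  rw [step1, div_eq_mul_inv (py₁ / C₂), ENNReal.inv_div (Or.inl hC₂top) (Or.inl hC₂0)]
  simp only [div_eq_mul_inv]
  symm
  calc py₁ * C₂⁻¹ * (C₂ * py₂⁻¹) = py₁ * py₂⁻¹ * (C₂⁻¹ * C₂) := by ring
  _ = py₁ * py₂⁻¹ := by rw [ENNReal.inv_mul_cancel hC₂0 hC₂top, mul_one]
end
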